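/- The functions ψ_n(z) = (−z)^n (d/(z dz))^n (sin z / z) satisfy the spherical Bessel differential equation: z²ψ_n''(z) + 2zψ_n'(z) + (z² − n(n+1))ψ_n(z) = 0 for z ≠ 0. -/

import Mathlib

noncomputable section

open Filter Real

/-- The operator \`f ↦ f'(z)/z\`. -/
def Dop (f : ℝ → ℝ) : ℝ → ℝ := fun z => deriv f z / z

/-- \`ψ_n(z) = (−z)^n (d/(z dz))^n (sin z / z)\`. -/
def psi (n : ℕ) (z : ℝ) : ℝ := (-z) ^ n * (Dop^[n] (fun w => Real.sin w / w)) z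

lemma g_smooth (n : ℕ) :
    ContDiffOn ℝ ⊤ (Dop^[n] (fun w => Real.sin w / w)) {z : ℝ | z ≠ 0} := by
  induction n with
  | zero =>
    show ContDiffOn ℝ ⊤ (fun w => Real.sin w / w) {z : ℝ | z ≠ 0}
    exact Real.contDiff_sin.contDiffOn.div contDiffOn_id (fun x hx => hx)
  | succ n ih =>
    rw [Function.iterate_succ_apply']
    exact (ih.deriv_of_isOpen isOpen_ne le_top).div contDiffOn_id fun x hx => hx

lemma diff_aux {f : ℝ → ℝ} (hf : ContDiffOn ℝ ⊤ f {z : ℝ | z ≠ 0}) {z : ℝ} (hz : z ≠ 0) :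
    DifferentiableAt ℝ f z :=
  (hf.contDiffAt (isOpen_ne.mem_nhds hz)).differentiableAt (by simp)

lemma g_ode (n : ℕ) : ∀ z : ℝ, z ≠ 0 →
    z * deriv (deriv (Dop^[n] (fun w => Real.sin w / w))) z
      + (2 * (n : ℝ) + 2) * deriv (Dop^[n] (fun w => Real.sin w / w)) z
      + z * (Dop^[n] (fun w => Real.sin w / w)) z = 0 := by
  induction n with
  | zero =>
    intro z hz
    simp only [Function.iterate_zero, id_eq, Nat.cast_zero]
    have hd1 : ∀ w : ℝ, w ≠ 0 → HasDerivAt (fun w => Real.sin w / w)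
        ((Real.cos w * w - Real.sin w * 1) / w ^ 2) w := fun w hw =>
      (Real.hasDerivAt_sin w).div (hasDerivAt_id' w) hw
    have e1 : deriv (fun w => Real.sin w / w) z = (Real.cos z * z - Real.sin z * 1) / z ^ 2 :=
      (hd1 z hz).deriv
    have he : deriv (fun w => Real.sin w / w) =ᶠ[nhds z]
        fun w => (Real.cos w * w - Real.sin w * 1) / w ^ 2 := by
      filter_upwards [isOpen_ne.mem_nhds hz] with w hw using (hd1 w hw).deriv
    have hN : HasDerivAt (fun w => Real.cos w * w - Real.sin w * 1)
        ((-Real.sin z * z + Real.cos z * 1) - Real.cos z * 1) z :=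
      ((Real.hasDerivAt_cos z).mul (hasDerivAt_id' z)).sub ((Real.hasDerivAt_sin z).mul_const 1)
    have e2 := he.deriv_eq.trans (HasDerivAt.deriv
      (hN.div (hasDerivAt_pow 2 z) (pow_ne_zero 2 hz)))
    rw [e1, e2]
    field_simp
    ring
  | succ n ih =>
    intro z hz
    set G : ℝ → ℝ := Dop^[n] (fun w => Real.sin w / w) with hGdef
    have hs0 : ContDiffOn ℝ ⊤ G {z : ℝ | z ≠ 0} := g_smooth n
    have hs1 : ContDiffOn ℝ ⊤ (deriv G) {z : ℝ | z ≠ 0} :=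
      hs0.deriv_of_isOpen isOpen_ne le_top
    have hs2 : ContDiffOn ℝ ⊤ (deriv (deriv G)) {z : ℝ | z ≠ 0} :=
      hs1.deriv_of_isOpen isOpen_ne le_top
    have hd1 : ∀ w : ℝ, w ≠ 0 → HasDerivAt G (deriv G w) w := fun w hw =>
      (diff_aux hs0 hw).hasDerivAt
    have hd2 : ∀ w : ℝ, w ≠ 0 → HasDerivAt (deriv G) (deriv (deriv G) w) w := fun w hw =>
      (diff_aux hs1 hw).hasDerivAt
    have hd3 : ∀ w : ℝ, w ≠ 0 →
        HasDerivAt (deriv (deriv G)) (deriv (deriv (deriv G)) w) w := fun w hw =>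
      (diff_aux hs2 hw).hasDerivAt
    have hG1 : Dop^[n+1] (fun w => Real.sin w / w) = fun w => deriv G w / w := by
      rw [Function.iterate_succ_apply']; rfl
    have hD : ∀ w : ℝ, w ≠ 0 → HasDerivAt (fun w => deriv G w / w)
        ((deriv (deriv G) w * w - deriv G w * 1) / w ^ 2) w := fun w hw =>
      (hd2 w hw).div (hasDerivAt_id' w) hw
    have e1 : deriv (Dop^[n+1] (fun w => Real.sin w / w)) z
        = (deriv (deriv G) z * z - deriv G z * 1) / z ^ 2 := by
      rw [hG1]; exact (hD z hz).deriv
    have he : deriv (Dop^[n+1] (fun w => Real.sin w / w)) =ᶠ[nhds z]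
        fun w => (deriv (deriv G) w * w - deriv G w * 1) / w ^ 2 := by
      filter_upwards [isOpen_ne.mem_nhds hz] with w hw
      rw [hG1]; exact (hD w hw).deriv
    have hN : HasDerivAt (fun w => deriv (deriv G) w * w - deriv G w * 1)
        ((deriv (deriv (deriv G)) z * z + deriv (deriv G) z * 1) - deriv (deriv G) z * 1) z :=
      ((hd3 z hz).mul (hasDerivAt_id' z)).sub ((hd2 z hz).mul_const 1)
    have e2 := he.deriv_eq.trans (HasDerivAt.deriv
      (hN.div (hasDerivAt_pow 2 z) (pow_ne_zero 2 hz)))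
    -- differentiated ODE
    have hF : (fun w => w * deriv (deriv G) w + (2 * (n : ℝ) + 2) * deriv G w + w * G w)
        =ᶠ[nhds z] fun _ => (0 : ℝ) := by
      filter_upwards [isOpen_ne.mem_nhds hz] with w hw using ih w hw
    have hFd : HasDerivAt (fun w => w * deriv (deriv G) w + (2 * (n : ℝ) + 2) * deriv G w + w * G w)
        ((1 * deriv (deriv G) z + z * deriv (deriv (deriv G)) z)
          + (2 * (n : ℝ) + 2) * deriv (deriv G) z
          + (1 * G z + z * deriv G z)) z :=
      (((hasDerivAt_id' z).mul (hd3 z hz)).add ((hd2 z hz).const_mul (2 * (n : ℝ) + 2))).add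
        ((hasDerivAt_id' z).mul (hd1 z hz))
    have e3 : (1 * deriv (deriv G) z + z * deriv (deriv (deriv G)) z)
          + (2 * (n : ℝ) + 2) * deriv (deriv G) z
          + (1 * G z + z * deriv G z) = 0 := by
      have := hF.deriv_eq
      rw [deriv_const] at this
      exact hFd.deriv.symm.trans this
    have hODE := ih z hz
    rw [e1, e2, hG1]
    push_cast
    field_simp
    linear_combination z * e3 - hODE

/-- `ψ_n` satisfies the spherical Bessel equation
`z²ψ'' + 2zψ' + (z² − n(n+1))ψ = 0` for `z ≠ 0`. -/
theorem psi_spherical_bessel (n : ℕ) (z : ℝ) (hz : z ≠ 0) :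
    z ^ 2 * deriv (deriv (psi n)) z + 2 * z * deriv (psi n) z
      + (z ^ 2 - n * (n + 1)) * psi n z = 0 := by
  set G : ℝ → ℝ := Dop^[n] (fun w => Real.sin w / w) with hGdef
  have hs0 : ContDiffOn ℝ ⊤ G {z : ℝ | z ≠ 0} := g_smooth n
  have hs1 : ContDiffOn ℝ ⊤ (deriv G) {z : ℝ | z ≠ 0} :=
    hs0.deriv_of_isOpen isOpen_ne le_top
  have hd1 : ∀ w : ℝ, w ≠ 0 → HasDerivAt G (deriv G w) w := fun w hw =>
    (diff_aux hs0 hw).hasDerivAt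
  have hd2 : ∀ w : ℝ, w ≠ 0 → HasDerivAt (deriv G) (deriv (deriv G) w) w := fun w hw =>
    (diff_aux hs1 hw).hasDerivAt
  have hP : ∀ w : ℝ, HasDerivAt (fun w : ℝ => (-w) ^ n) (((n : ℝ) * (-w) ^ (n - 1)) * (-1)) w :=
    fun w => (hasDerivAt_pow n (-w)).comp w (hasDerivAt_neg w)
  have hP' : ∀ w : ℝ, HasDerivAt (fun w : ℝ => (-w) ^ (n - 1))
      (((n - 1 : ℕ) * (-w) ^ (n - 1 - 1)) * (-1)) w :=
    fun w => (hasDerivAt_pow (n - 1) (-w)).comp w (hasDerivAt_neg w)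
  have hDpsi : ∀ w : ℝ, w ≠ 0 → HasDerivAt (psi n)
      ((((n : ℝ) * (-w) ^ (n - 1)) * (-1)) * G w + (-w) ^ n * deriv G w) w := fun w hw =>
    (hP w).mul (hd1 w hw)
  have e1 : deriv (psi n) z
      = (((n : ℝ) * (-z) ^ (n - 1)) * (-1)) * G z + (-z) ^ n * deriv G z :=
    (hDpsi z hz).deriv
  have he : deriv (psi n) =ᶠ[nhds z]
      fun w => (((n : ℝ) * (-w) ^ (n - 1)) * (-1)) * G w + (-w) ^ n * deriv G w := by
    filter_upwards [isOpen_ne.mem_nhds hz] with w hw using (hDpsi w hw).deriv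
  have hT1 : HasDerivAt (fun w : ℝ => (((n : ℝ) * (-w) ^ (n - 1)) * (-1)) * G w)
      (((((n : ℝ) * ((((n - 1 : ℕ) : ℝ) * (-z) ^ (n - 1 - 1)) * (-1))) * (-1)) * G z)
        + ((((n : ℝ) * (-z) ^ (n - 1)) * (-1)) * deriv G z)) z :=
    ((((hP' z).const_mul (n : ℝ)).mul_const (-1)).mul (hd1 z hz))
  have hT2 : HasDerivAt (fun w : ℝ => (-w) ^ n * deriv G w)
      ((((n : ℝ) * (-z) ^ (n - 1)) * (-1)) * deriv G z + (-z) ^ n * deriv (deriv G) z) z :=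
    (hP z).mul (hd2 z hz)
  have e2 := he.deriv_eq.trans (HasDerivAt.deriv (hT1.add hT2))
  have hA : ((n : ℝ) * (-z) ^ (n - 1)) * (-1) = (n : ℝ) * (-z) ^ n / z := by
    match n with
    | 0 => simp
    | (k + 1) =>
      simp only [Nat.add_sub_cancel, pow_succ]
      field_simp
  have hA' : ((n : ℝ) * ((((n - 1 : ℕ) : ℝ) * (-z) ^ (n - 1 - 1)) * (-1))) * (-1)
      = (n : ℝ) * ((n : ℝ) - 1) * (-z) ^ n / z ^ 2 := by
    match n with
    | 0 => simp
    | 1 => simp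
    | (k + 2) =>
      simp only [Nat.add_sub_cancel, pow_succ]
      push_cast
      field_simp
      ring
  have hODE := g_ode n z hz
  rw [← hGdef] at hODE
  have hpsi : psi n z = (-z) ^ n * G z := rfl
  rw [e1, e2, hpsi, hA, hA']
  field_simp
  linear_combination (z ^ n * (-1) ^ n * z) * hODE
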